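/- Explicit optimal dual solution for the cardinality-budget linear program: let I be a finite set, c : I → ℝ with c_i ≥ 0 for all i ∈ I, Γ a natural number with 1 ≤ Γ ≤ |I|, and let y* be the Γ-th largest value among (c_i)_{i∈I}. Define p_i := max(c_i − y*, 0) for each i ∈ I. Then y* ≥ 0, p_i ≥ 0 and y* + p_i ≥ c_i for all i ∈ I, and Γ·y* + Σ_{i∈I} p_i equals the sum of the Γ largest values among (c_i)_{i∈I}. -/

import Mathlib

private lemma sum_map_sub_aux (L : List ℝ) (y : ℝ) :
    (L.map (fun x => x - y)).sum = L.sum - L.length * y := by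
  induction L with
  | nil => simp
  | cons a t ih => simp [ih]; ring

theorem explicit_dual_solution_cardinality_budget_LP
    {I : Type*} [Fintype I] (c : I → ℝ) (hc : ∀ i, 0 ≤ c i)
    (Γ : ℕ) (hΓ1 : 1 ≤ Γ) (hΓ2 : Γ ≤ Fintype.card I)
    (l : List ℝ) (hl : l.Pairwise (· ≥ ·))
    (hlperm : l.Perm (Finset.univ.val.map c).toList)
    (ystar : ℝ) (hystar : ystar = l.getD (Γ - 1) 0)
    (p : I → ℝ) (hp : p = fun i => max (c i - ystar) 0) :
    0 ≤ ystar ∧ (∀ i, 0 ≤ p i) ∧ (∀ i, c i ≤ ystar + p i) ∧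
      (Γ : ℝ) * ystar + ∑ i, p i = (l.take Γ).sum := by
  have hnonneg : ∀ x ∈ l, 0 ≤ x := by
    intro x hx
    have hx' : x ∈ (Finset.univ.val.map c).toList := hlperm.mem_iff.mp hx
    rw [Multiset.mem_toList, Multiset.mem_map] at hx'
    obtain ⟨i, -, rfl⟩ := hx'
    exact hc i
  have hlen : l.length = Fintype.card I := by
    rw [hlperm.length_eq, Multiset.length_toList, Multiset.card_map]
    rfl
  have hΓlt : Γ - 1 < l.length := by omega
  have hget : ystar = l.get ⟨Γ - 1, hΓlt⟩ := by
    rw [hystar, List.getD_eq_getElem l 0 hΓlt]; rfl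
  have hy0 : 0 ≤ ystar := by
    rw [hget]; exact hnonneg _ (l.get_mem _)
  have hp0 : ∀ i, 0 ≤ p i := by intro i; rw [hp]; exact le_max_right _ _
  refine ⟨hy0, hp0, ?_, ?_⟩
  · intro i
    rw [hp]
    have := le_max_left (c i - ystar) 0
    simp only []
    linarith
  · -- key computation
    set f : ℝ → ℝ := fun x => max (x - ystar) 0 with hf
    have htake : ∀ x ∈ l.take Γ, ystar ≤ x := by
      intro x hx
      obtain ⟨j, hj, rfl⟩ := List.mem_iff_getElem.mp hx
      have hjΓ : j < Γ := lt_of_lt_of_le hj (by rw [List.length_take]; omega)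
      have hjl : j < l.length := by
        have := hj; rw [List.length_take] at this; omega
      rw [List.getElem_take]
      rcases eq_or_lt_of_le (Nat.le_sub_one_of_lt hjΓ) with h | h
      · exact le_of_eq (by rw [hget]; show l[Γ-1] = l[j]; congr 1; omega)
      · rw [hget]
        exact hl.rel_get_of_lt (show (⟨j, hjl⟩ : Fin l.length) < ⟨Γ - 1, hΓlt⟩ by
          simpa using h)
    have hdrop : ∀ x ∈ l.drop Γ, x ≤ ystar := by
      intro x hx
      obtain ⟨j, hj, rfl⟩ := List.mem_iff_getElem.mp hx
      have hjl : Γ + j < l.length := by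
        have := hj; rw [List.length_drop] at this; omega
      rw [← List.getElem_drop' hjl]
      rw [hget]
      exact hl.rel_get_of_lt (show (⟨Γ - 1, hΓlt⟩ : Fin l.length) < ⟨Γ + j, hjl⟩ by
        simp; omega)
    have hsum1 : ((l.take Γ).map f).sum = (l.take Γ).sum - Γ * ystar := by
      have : (l.take Γ).map f = (l.take Γ).map (fun x => x - ystar) := by
        apply List.map_congr_left
        intro x hx
        simp [hf, max_eq_left, sub_nonneg.mpr (htake x hx)]
      rw [this, sum_map_sub_aux, List.length_take, min_eq_left (by omega)]
    have hsum2 : ((l.drop Γ).map f).sum = 0 := by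
      apply List.sum_eq_zero
      intro x hx
      obtain ⟨y, hy, rfl⟩ := List.mem_map.mp hx
      simp [hf, max_eq_right, sub_nonpos.mpr (hdrop y hy)]
    have hlsum : (l.map f).sum = (l.take Γ).sum - Γ * ystar := by
      conv_lhs => rw [← List.take_append_drop Γ l]
      rw [List.map_append, List.sum_append, hsum1, hsum2, add_zero]
    have hpsum : ∑ i, p i = (l.map f).sum := by
      have h1 : ∑ i, p i = (Multiset.map f (Finset.univ.val.map c)).sum := by
        rw [hp, Multiset.map_map]
        rfl
      have h2 : ((Finset.univ.val.map c).toList.map f).sum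
          = (Multiset.map f (Finset.univ.val.map c)).sum := by
        conv_rhs => rw [← Multiset.coe_toList (Finset.univ.val.map c)]
        rw [Multiset.map_coe, Multiset.sum_coe]
      rw [h1, ← h2, ← (hlperm.map f).sum_eq]
    rw [hpsum, hlsum]; ring
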